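/- Let m ∈ ℕ with m ≥ 1, let Δ > 0 and ε > 0, and let ν = Lap(2Δ/ε) be the Laplace measure with scale 2Δ/ε. For scores s : Fin m → ℝ and an index i, let A_i(s) = {η ∈ ℝ^m : ∀ j ≠ i, s(i) + η(i) > s(j) + η(j)} be the event that candidate i wins Report-Noisy-Max. Then for all s, s' : Fin m → ℝ with |s(j) − s'(j)| ≤ Δ for every j, and every index i: ν^{⊗m}(A_i(s)) ≤ exp(ε) · ν^{⊗m}(A_i(s')). (Report-Noisy-Max with Laplace noise of scale 2Δ/ε satisfies ε-differential privacy.) -/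

import Mathlib

open MeasureTheory Set ENNReal

/-- The Laplace measure `Lap(b)` on `ℝ`, with density `x ↦ (1/(2b))·exp(−|x|/b)`
with respect to Lebesgue measure. -/
noncomputable def lapMeasure (b : ℝ) : Measure ℝ :=
  volume.withDensity fun x => ENNReal.ofReal (1 / (2 * b) * Real.exp (-|x| / b))

/-- Monotonicity of the product measure in each factor, on measurable sets. -/
lemma pi_apply_mono {ι : Type*} [Fintype ι] {α : ι → Type*} [∀ i, MeasurableSpace (α i)]
    {μ ν : ∀ i, Measure (α i)} (h : ∀ i, μ i ≤ ν i) {S : Set (∀ i, α i)}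
    (hS : MeasurableSet S) : Measure.pi μ S ≤ Measure.pi ν S := by
  rw [Measure.pi_def, Measure.pi_def, toMeasure_apply _ _ hS, toMeasure_apply _ _ hS]
  refine OuterMeasure.le_boundedBy.2 (fun t => (OuterMeasure.boundedBy_le t).trans ?_) S
  exact Finset.prod_le_prod' fun j _ => (Measure.le_iff'.1 (h j)) _

/-- Pushforward of a density measure on `ℝ` under translation. -/
lemma map_add_withDensity (c : ℝ) (f : ℝ → ℝ≥0∞) :
    Measure.map (· + c) (volume.withDensity f) = volume.withDensity (fun x => f (x - c)) := by
  ext s hs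
  rw [Measure.map_apply (measurable_add_const c) hs, withDensity_apply _ hs,
    withDensity_apply _ ((measurable_add_const c) hs)]
  have h := (measurePreserving_add_right volume c).setLIntegral_comp_preimage_emb
    (measurableEmbedding_addRight c) (fun x => f (x - c)) s
  simp only [add_sub_cancel_right] at h; exact h

lemma winSet_measurable {m : ℕ} (s : Fin m → ℝ) (i : Fin m) :
    MeasurableSet {η : Fin m → ℝ | ∀ j, j ≠ i → s i + η i > s j + η j} := by
  have : {η : Fin m → ℝ | ∀ j, j ≠ i → s i + η i > s j + η j}
      = ⋂ j, {η : Fin m → ℝ | j ≠ i → s i + η i > s j + η j} := by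
    ext η; simp [Set.mem_iInter]
  rw [this]
  refine MeasurableSet.iInter fun j => ?_
  by_cases hj : j = i
  · simp [hj]
  · have : {η : Fin m → ℝ | j ≠ i → s i + η i > s j + η j}
        = {η : Fin m → ℝ | s j + η j < s i + η i} := by ext η; simp [hj]
    rw [this]
    exact measurableSet_lt (measurable_const.add (measurable_pi_apply j))
      (measurable_const.add (measurable_pi_apply i))

/-- Report-Noisy-Max with i.i.d. Laplace noise of scale `2Δ/ε` satisfies `ε`-DP: for score
vectors `s, s'` with `|s(j) − s'(j)| ≤ Δ` for all `j`, the probability that candidate `i`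
wins under `s` is at most `exp(ε)` times the probability that it wins under `s'`. -/
theorem report_noisy_max_laplace_dp (m : ℕ) (hm : 1 ≤ m) (Δ ε : ℝ) (hΔ : 0 < Δ) (hε : 0 < ε)
    (s s' : Fin m → ℝ) (hsens : ∀ j, |s j - s' j| ≤ Δ) (i : Fin m) :
    (Measure.pi fun _ : Fin m => lapMeasure (2 * Δ / ε))
        {η : Fin m → ℝ | ∀ j, j ≠ i → s i + η i > s j + η j} ≤
      ENNReal.ofReal (Real.exp ε) *
        (Measure.pi fun _ : Fin m => lapMeasure (2 * Δ / ε))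
          {η : Fin m → ℝ | ∀ j, j ≠ i → s' i + η i > s' j + η j} := by
  set b : ℝ := 2 * Δ / ε with hb_def
  have hb : 0 < b := by positivity
  set c : ℝ := 2 * Δ with hc_def
  have hc : 0 < c := by positivity
  set f : ℝ → ℝ≥0∞ := fun x => ENNReal.ofReal (1 / (2 * b) * Real.exp (-|x| / b)) with hf_def
  have hfmeas : Measurable f := by
    apply Measurable.ennreal_ofReal
    fun_prop
  set K : ℝ≥0∞ := ENNReal.ofReal (Real.exp ε) with hK_def
  have hlap : lapMeasure b = volume.withDensity f := rfl
  -- pointwise density bound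
  have hdle : ∀ x : ℝ, f (x - c) ≤ K * f x := by
    intro x
    rw [hK_def, hf_def, ← ENNReal.ofReal_mul (Real.exp_nonneg ε)]
    refine ENNReal.ofReal_le_ofReal ?_
    have h1 : |x| - |x - c| ≤ c := by
      have h := abs_sub_abs_le_abs_sub x (x - c)
      replace h : |x| - |x - c| ≤ |c| := h.trans_eq (by congr 1; ring)
      simpa [abs_of_pos hc] using h
    have hcb : c / b = ε := by
      rw [hc_def, hb_def]; field_simp; exact hc_def.symm
    have h2 : -|x - c| / b ≤ ε - |x| / b := by
      have h3 : (|x| - |x - c|) / b ≤ c / b := by gcongr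
      rw [hcb, sub_div] at h3
      rw [neg_div]
      linarith
    calc 1 / (2 * b) * Real.exp (-|x - c| / b)
        ≤ 1 / (2 * b) * Real.exp (ε - |x| / b) := by
          have h4 : Real.exp (-|x - c| / b) ≤ Real.exp (ε - |x| / b) :=
            Real.exp_le_exp.2 h2
          have h5 : (0:ℝ) ≤ 1 / (2 * b) := by positivity
          exact mul_le_mul_of_nonneg_left h4 h5
      _ = Real.exp ε * (1 / (2 * b) * Real.exp (-|x| / b)) := by
          rw [show ε - |x| / b = ε + -|x| / b by ring, Real.exp_add]
          ring
  -- the shift map on the product space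
  set T : (Fin m → ℝ) → (Fin m → ℝ) := fun η => Function.update η i (η i + c) with hT_def
  have hT : Measurable T := by
    apply measurable_pi_lambda
    intro j
    by_cases hj : j = i
    · subst hj
      have : (fun η : Fin m → ℝ => T η j) = fun η => η j + c := by
        funext η; simp [hT_def]
      rw [this]
      exact Measurable.add_const (measurable_pi_apply (X := fun _ : Fin m => ℝ) j) c
    · have : (fun η : Fin m → ℝ => T η j) = fun η => η j := by
        funext η; simp [hT_def, Function.update_apply, hj]
      rw [this]; exact measurable_pi_apply j
  set A : Set (Fin m → ℝ) := {η | ∀ j, j ≠ i → s i + η i > s j + η j} with hA_def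
  set A' : Set (Fin m → ℝ) := {η | ∀ j, j ≠ i → s' i + η i > s' j + η j} with hA'_def
  have hA'meas : MeasurableSet A' := winSet_measurable s' i
  -- A ⊆ T⁻¹ A'
  have hsub : A ⊆ T ⁻¹' A' := by
    intro η hη j hj
    have h1 := hη j hj
    have h2 := abs_le.1 (hsens i)
    have h3 := abs_le.1 (hsens j)
    have e1 : T η i = η i + c := by simp [hT_def]
    have e2 : T η j = η j := by simp [hT_def, Function.update_apply, hj]
    show s' i + T η i > s' j + T η j
    have hc2 : c = 2 * Δ := hc_def
    rw [e1, e2]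
    simp only [gt_iff_lt] at h1 ⊢
    linarith
  -- factor measures after the shift
  set ν : Fin m → Measure ℝ :=
    fun j => if j = i then volume.withDensity (fun x => f (x - c)) else lapMeasure b with hν_def
  set ν' : Fin m → Measure ℝ :=
    fun j => if j = i then K • lapMeasure b else lapMeasure b with hν'_def
  haveI hsf : ∀ j, SigmaFinite (ν j) := by
    intro j
    by_cases hj : j = i <;> simp only [hν_def, hj, if_true, if_false]
    · exact SigmaFinite.withDensity_of_ne_top' (fun x => ENNReal.ofReal_ne_top)
    · rw [hlap]
      exact SigmaFinite.withDensity_of_ne_top' (fun x => ENNReal.ofReal_ne_top)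
  haveI hsf' : ∀ j, SigmaFinite (ν' j) := by
    intro j
    by_cases hj : j = i <;> simp only [hν'_def, hj, if_true, if_false]
    · rw [hlap, ← withDensity_smul _ hfmeas]
      refine SigmaFinite.withDensity_of_ne_top' (fun x => ?_)
      exact ENNReal.mul_ne_top ENNReal.ofReal_ne_top ENNReal.ofReal_ne_top
    · rw [hlap]
      exact SigmaFinite.withDensity_of_ne_top' (fun x => ENNReal.ofReal_ne_top)
  haveI hsflap : SigmaFinite (lapMeasure b) := by
    rw [hlap]; exact SigmaFinite.withDensity_of_ne_top' (fun x => ENNReal.ofReal_ne_top)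
  -- pushforward of the product measure under T
  have hmap : Measure.pi ν = Measure.map T (Measure.pi fun _ : Fin m => lapMeasure b) := by
    refine Measure.pi_eq fun t ht => ?_
    rw [Measure.map_apply hT (MeasurableSet.pi Set.countable_univ fun j _ => ht j)]
    have hpre : T ⁻¹' (Set.pi Set.univ t)
        = Set.pi Set.univ (Function.update t i ((· + c) ⁻¹' (t i))) := by
      ext η
      simp only [Set.mem_preimage, Set.mem_pi, Set.mem_univ, forall_true_left]
      constructor
      · intro h j
        by_cases hj : j = i
        · subst hj; simpa [hT_def] using h j
        · have := h j; simp only [hT_def, Function.update_apply, hj, if_false] at this ⊢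
          exact this
      · intro h j
        by_cases hj : j = i
        · subst hj
          have := h j; simp only [Function.update_self] at this
          simpa [hT_def] using this
        · have := h j; simp only [Function.update_apply, hj, if_false] at this
          simpa [hT_def, Function.update_apply, hj] using this
    rw [hpre, Measure.pi_pi]
    refine Finset.prod_congr rfl fun j _ => ?_
    by_cases hj : j = i
    · subst hj
      simp only [Function.update_self, hν_def, if_true]
      rw [hlap, ← map_add_withDensity c f,
        Measure.map_apply (measurable_add_const c) (ht j)]
    · simp [hν_def, Function.update_apply, hj]
  -- pi ν' = K • pi lap
  have hν'eq : Measure.pi ν' = K • (Measure.pi fun _ : Fin m => lapMeasure b) := by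
    refine Measure.pi_eq fun t ht => ?_
    rw [Measure.smul_apply, Measure.pi_pi, smul_eq_mul]
    refine Eq.symm ?_
    calc ∏ j, ν' j (t j) = ∏ j, (if j = i then K else 1) * lapMeasure b (t j) := by
          refine Finset.prod_congr rfl fun j _ => ?_
          by_cases hj : j = i <;> simp [hν'_def, hj, Measure.smul_apply, smul_eq_mul]
      _ = (∏ j, if j = i then K else 1) * ∏ j, lapMeasure b (t j) :=
          Finset.prod_mul_distrib
      _ = K * ∏ j, lapMeasure b (t j) := by
          rw [Finset.prod_ite_eq' Finset.univ i fun _ => K]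
          simp
  -- the chain of (in)equalities
  calc (Measure.pi fun _ : Fin m => lapMeasure b) A
      ≤ (Measure.pi fun _ : Fin m => lapMeasure b) (T ⁻¹' A') := measure_mono hsub
    _ = Measure.map T (Measure.pi fun _ : Fin m => lapMeasure b) A' :=
        (Measure.map_apply hT hA'meas).symm
    _ = Measure.pi ν A' := by rw [hmap]
    _ ≤ Measure.pi ν' A' := by
        refine pi_apply_mono (fun j => ?_) hA'meas
        by_cases hj : j = i <;> simp only [hν_def, hν'_def, hj, if_true, if_false, le_refl]
        rw [hlap, ← withDensity_smul _ hfmeas]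
        exact withDensity_mono (Filter.Eventually.of_forall hdle)
    _ = K * (Measure.pi fun _ : Fin m => lapMeasure b) A' := by
        rw [hν'eq, Measure.smul_apply, smul_eq_mul]
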